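/- Let X and A be nonempty finite types, δ' ∈ (0,1), and n : X × A → ℕ with n(x,a) ≥ 1 for every (x,a). For each (x,a) ∈ X × A, let p*(·|x,a) ∈ PMF X be a probability mass function on X, let Y^{x,a}_1, …, Y^{x,a}_{n(x,a)} be i.i.d. random variables distributed according to p*(·|x,a), and let p̂(·|x,a) be the corresponding empirical distribution, p̂(x'|x,a) = (1/n(x,a))·#{i : Y^{x,a}_i = x'} (the sample families for distinct pairs (x,a) need not be independent of each other). Then with probability at least 1 − δ', simultaneously for all (x,a) ∈ X × A: Σ_{x'∈X} |p̂(x'|x,a) − p*(x'|x,a)| ≤ √((2/n(x,a))·log(2·|X|·|A|·2^{|X|} / δ')). -/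

import Mathlib

open MeasureTheory ProbabilityTheory
open scoped ENNReal
open Real


lemma bern_mgf_le (p L : ℝ) (hp0 : 0 ≤ p) (hp1 : p ≤ 1) :
    (1 - p) * exp (-(L * p)) + p * exp (L * (1 - p)) ≤ exp (L ^ 2 / 8) := by
  set den : ℝ → ℝ := fun t => 1 - p + p * exp t with hden_def
  have hden : ∀ t, 0 < den t := by
    intro t
    rcases eq_or_lt_of_le hp0 with h | h
    · simp [hden_def, ← h]
    · have := exp_pos t
      simp only [hden_def]
      nlinarith
  have hdend : ∀ t, HasDerivAt den (p * exp t) t := by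
    intro t
    exact ((Real.hasDerivAt_exp t).const_mul p).const_add (1 - p)
  set g : ℝ → ℝ := fun t => p * t + t ^ 2 / 8 - Real.log (den t) with hg_def
  set g' : ℝ → ℝ := fun t => p + t / 4 - p * exp t / den t with hg'_def
  have hg : ∀ t, HasDerivAt g (g' t) t := by
    intro t
    have h1 : HasDerivAt (fun t : ℝ => p * t) p t := by
      simpa using (hasDerivAt_id t).const_mul p
    have h2 : HasDerivAt (fun t : ℝ => t ^ 2 / 8) (t / 4) t := by
      have := (hasDerivAt_pow 2 t).div_const 8
      exact this.congr_deriv (by rw [show (2:ℕ) - 1 = 1 from rfl]; push_cast; ring)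
    have h3 : HasDerivAt (fun t => Real.log (den t)) (p * exp t / den t) t :=
      (hdend t).log (hden t).ne'
    exact (h1.add h2).sub h3
  have hg' : ∀ t, HasDerivAt g' (1 / 4 - p * exp t * (1 - p) / (den t) ^ 2) t := by
    intro t
    have h1 : HasDerivAt (fun t : ℝ => p + t / 4) (1 / 4) t := by
      simpa using ((hasDerivAt_id t).div_const 4).const_add p
    have h2 : HasDerivAt (fun t => p * exp t / den t)
        ((p * exp t * den t - p * exp t * (p * exp t)) / (den t) ^ 2) t :=
      (((Real.hasDerivAt_exp t).const_mul p)).div (hdend t) (hden t).ne'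
    have h2' : HasDerivAt (fun t => p * exp t / den t)
        (p * exp t * (1 - p) / (den t) ^ 2) t := by
      convert h2 using 1
      rw [show den t = 1 - p + p * exp t from rfl]
      have h := (hden t); rw [show den t = 1 - p + p * exp t from rfl] at h
      field_simp
      ring
    exact h1.sub h2'
  have hg''nonneg : ∀ t, 0 ≤ 1 / 4 - p * exp t * (1 - p) / (den t) ^ 2 := by
    intro t
    have hd := hden t
    have he := exp_pos t
    rw [sub_nonneg, div_le_iff₀ (by positivity)]
    have : den t = (1 - p) + p * exp t := rfl
    nlinarith [sq_nonneg ((1 - p) - p * exp t)]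
  have hg'mono : Monotone g' :=
    monotone_of_deriv_nonneg (fun t => (hg' t).differentiableAt)
      (fun t => by rw [(hg' t).deriv]; exact hg''nonneg t)
  have hg'0 : g' 0 = 0 := by
    simp [hg'_def, hden_def]
  have hgmono : MonotoneOn g (Set.Ici 0) :=
    monotoneOn_of_deriv_nonneg (convex_Ici 0)
      (Continuous.continuousOn (by
        fun_prop (disch := intro t; exact (hden t).ne')) )
      (fun t ht => (hg t).differentiableAt.differentiableWithinAt)
      (fun t ht => by
        rw [(hg t).deriv]
        rw [interior_Ici, Set.mem_Ioi] at ht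
        calc (0:ℝ) = g' 0 := hg'0.symm
        _ ≤ g' t := hg'mono ht.le)
  have hganti : AntitoneOn g (Set.Iic 0) :=
    antitoneOn_of_deriv_nonpos (convex_Iic 0)
      (Continuous.continuousOn (by
        fun_prop (disch := intro t; exact (hden t).ne')) )
      (fun t ht => (hg t).differentiableAt.differentiableWithinAt)
      (fun t ht => by
        rw [(hg t).deriv]
        rw [interior_Iic, Set.mem_Iio] at ht
        calc g' t ≤ g' 0 := hg'mono ht.le
        _ = 0 := hg'0)
  have hg0 : g 0 = 0 := by simp [hg_def, hden_def]
  have hgnonneg : ∀ t, 0 ≤ g t := by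
    intro t
    rcases le_total 0 t with h | h
    · rw [← hg0]; exact hgmono Set.self_mem_Ici h h
    · rw [← hg0]; exact hganti h Set.self_mem_Iic h
  have hlog : Real.log (den L) ≤ p * L + L ^ 2 / 8 := by
    have := hgnonneg L
    simp only [hg_def] at this
    linarith
  have hden_le : den L ≤ exp (p * L + L ^ 2 / 8) := by
    rw [← Real.exp_log (hden L)]
    exact exp_le_exp.mpr hlog
  calc (1 - p) * exp (-(L * p)) + p * exp (L * (1 - p))
      = exp (-(L * p)) * den L := by
        have : exp (L * (1 - p)) = exp (-(L * p)) * exp L := by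
          rw [← Real.exp_add]; ring_nf
        rw [this]
        have : den L = 1 - p + p * exp L := rfl
        rw [this]; ring
    _ ≤ exp (-(L * p)) * exp (p * L + L ^ 2 / 8) := by
        exact mul_le_mul_of_nonneg_left hden_le (exp_pos _).le
    _ = exp (L ^ 2 / 8) := by rw [← Real.exp_add]; ring_nf

lemma subset_dev_bound
    {Ω : Type*} [MeasureSpace Ω] [IsProbabilityMeasure (ℙ : Measure Ω)]
    {X : Type*} [Fintype X] [DecidableEq X] [MeasurableSpace X] [MeasurableSingletonClass X]
    (m : ℕ) (p : PMF X) (Y : Fin m → Ω → X)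
    (hmeas : ∀ i, Measurable (Y i))
    (hindep : iIndepFun Y ℙ)
    (hlaw : ∀ i, Measure.map (Y i) ℙ = p.toMeasure)
    (B : Finset X) (t : ℝ) (ht : 0 ≤ t) :
    ℙ {ω | (m : ℝ) * t ≤
        ∑ i : Fin m, ((if Y i ω ∈ B then (1:ℝ) else 0) - ∑ x' ∈ B, (p x').toReal)}
      ≤ ENNReal.ofReal (Real.exp (-2 * m * t ^ 2)) := by
  classical
  set pB : ℝ := ∑ x' ∈ B, (p x').toReal with hpB_def
  -- basic facts about pB
  have hsum_univ : ∑ x' : X, (p x').toReal = 1 := by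
    have h1 : ∑ x' : X, p x' = 1 := by
      rw [← tsum_fintype (L := .unconditional _)]; exact p.tsum_coe
    have h2 : (∑ x' : X, p x').toReal = ∑ x' : X, (p x').toReal :=
      ENNReal.toReal_sum (fun a _ => p.apply_ne_top a)
    rw [h1] at h2; simpa using h2.symm
  have hpB0 : 0 ≤ pB := Finset.sum_nonneg fun _ _ => ENNReal.toReal_nonneg
  have hpB1 : pB ≤ 1 := by
    rw [← hsum_univ]
    exact Finset.sum_le_sum_of_subset_of_nonneg (Finset.subset_univ B)
      (fun _ _ _ => ENNReal.toReal_nonneg)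
  -- the centered indicator variables
  set g : X → ℝ := fun x => (if x ∈ B then (1:ℝ) else 0) - pB with hg_def
  set Z : Fin m → Ω → ℝ := fun i ω => g (Y i ω) with hZ_def
  have hgmeas : Measurable g := measurable_of_countable g
  have hZmeas : ∀ i, Measurable (Z i) := fun i => hgmeas.comp (hmeas i)
  have hZindep : iIndepFun Z ℙ :=
    hindep.comp (fun _ => g) (fun _ => hgmeas)
  -- single variable mgf bound
  have hmgf_single : ∀ (i : Fin m) (L : ℝ), mgf (Z i) ℙ L ≤ exp (L ^ 2 / 8) := by
    intro i L
    have hint : mgf (Z i) ℙ L = ∫ x, exp (L * g x) ∂(p.toMeasure) := by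
      rw [mgf, ← hlaw i, integral_map (hmeas i).aemeasurable]
      exact ((hgmeas.const_mul L).exp).aestronglyMeasurable
    rw [hint, PMF.integral_eq_sum]
    have hsplit : ∑ x : X, (p x).toReal • exp (L * g x)
        = pB * exp (L * (1 - pB)) + (1 - pB) * exp (-(L * pB)) := by
      have : ∀ x : X, (p x).toReal • exp (L * g x)
          = (if x ∈ B then (p x).toReal * exp (L * (1 - pB))
             else (p x).toReal * exp (-(L * pB))) := by
        intro x
        by_cases hx : x ∈ B <;> simp [hg_def, hx, smul_eq_mul, mul_comm]
      rw [Finset.sum_congr rfl (fun x _ => this x)]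
      rw [Finset.sum_ite]
      have hfil1 : Finset.univ.filter (fun x : X => x ∈ B) = B := by
        ext x; simp
      have hfil2 : ∑ x ∈ Finset.univ.filter (fun x : X => x ∉ B), (p x).toReal = 1 - pB := by
        have := Finset.sum_filter_add_sum_filter_not Finset.univ (fun x : X => x ∈ B)
          (fun x => (p x).toReal)
        rw [hsum_univ, hfil1] at this
        linarith
      rw [← Finset.sum_mul, ← Finset.sum_mul, hfil1, hfil2]
    rw [hsplit]
    have := bern_mgf_le pB L hpB0 hpB1
    linarith
  -- mgf of the sum
  set S : Ω → ℝ := fun ω => ∑ i : Fin m, Z i ω with hS_def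
  have hSmeas : Measurable S := by
    apply Finset.measurable_sum
    intro i _
    exact hZmeas i
  have hS_eq : S = ∑ i : Fin m, Z i := by
    ext ω; simp [hS_def]
  have hmgf_sum : ∀ L : ℝ, mgf S ℙ L ≤ exp (m * L ^ 2 / 8) := by
    intro L
    rw [hS_eq, hZindep.mgf_sum hZmeas Finset.univ]
    calc ∏ i : Fin m, mgf (Z i) ℙ L ≤ ∏ i : Fin m, exp (L ^ 2 / 8) := by
          apply Finset.prod_le_prod
          · intro i _
            exact mgf_nonneg
          · intro i _; exact hmgf_single i L
      _ = exp (m * L ^ 2 / 8) := by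
          rw [Finset.prod_const, ← Real.exp_nat_mul]
          norm_num
          ring_nf
  -- integrability
  have hint : ∀ L : ℝ, Integrable (fun ω => exp (L * S ω)) ℙ := by
    intro L
    refine Integrable.mono' (integrable_const (exp (|L| * (2 * m)))) 
      ((hSmeas.const_mul L).exp.aestronglyMeasurable) (Filter.Eventually.of_forall ?_)
    intro ω
    rw [Real.norm_eq_abs, abs_exp]
    apply Real.exp_le_exp.mpr
    have hZbound : ∀ i, |Z i ω| ≤ 2 := by
      intro i
      simp only [hZ_def, hg_def]
      have : |(if Y i ω ∈ B then (1:ℝ) else 0)| ≤ 1 := by split <;> norm_num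
      have h2 : |pB| ≤ 1 := abs_le.mpr ⟨by linarith, hpB1⟩
      calc |(if Y i ω ∈ B then (1:ℝ) else 0) - pB|
          ≤ |(if Y i ω ∈ B then (1:ℝ) else 0)| + |pB| := abs_sub _ _
        _ ≤ 2 := by linarith
    have hSb : |S ω| ≤ 2 * m := by
      calc |S ω| ≤ ∑ i : Fin m, |Z i ω| := Finset.abs_sum_le_sum_abs _ _
        _ ≤ ∑ _i : Fin m, (2:ℝ) := Finset.sum_le_sum (fun i _ => hZbound i)
        _ = 2 * m := by simp [mul_comm]
    calc L * S ω ≤ |L * S ω| := le_abs_self _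
      _ = |L| * |S ω| := abs_mul _ _
      _ ≤ |L| * (2 * m) := by
          apply mul_le_mul_of_nonneg_left hSb (abs_nonneg _)
  -- Chernoff
  have hchern := measure_ge_le_exp_mul_mgf (μ := ℙ) (X := S) ((m : ℝ) * t)
    (by positivity : (0:ℝ) ≤ 4 * t) (hint (4 * t))
  have hfinal : (ℙ {ω | (m : ℝ) * t ≤ S ω}).toReal ≤ exp (-2 * m * t ^ 2) := by
    calc (ℙ {ω | (m : ℝ) * t ≤ S ω}).toReal
        ≤ exp (-(4 * t) * ((m : ℝ) * t)) * mgf S ℙ (4 * t) := hchern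
      _ ≤ exp (-(4 * t) * ((m : ℝ) * t)) * exp (m * (4 * t) ^ 2 / 8) :=
          mul_le_mul_of_nonneg_left (hmgf_sum (4 * t)) (exp_pos _).le
      _ = exp (-2 * m * t ^ 2) := by rw [← Real.exp_add]; ring_nf
  have hne : ℙ {ω | (m : ℝ) * t ≤ S ω} ≠ ⊤ := measure_ne_top _ _
  have : ℙ {ω | (m : ℝ) * t ≤ S ω} ≤ ENNReal.ofReal (exp (-2 * m * t ^ 2)) := by
    rw [← ENNReal.ofReal_toReal hne]
    exact ENNReal.ofReal_le_ofReal hfinal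
  convert this using 3


lemma l1_pointwise {X : Type*} [Fintype X] [DecidableEq X] (m : ℕ) (hm : 0 < m)
    (q : X → ℝ) (hq1 : ∑ x : X, q x = 1) (c : X → ℕ) (hc : ∑ x : X, c x = m) (ε : ℝ)
    (hlt : ε < ∑ x : X, |(1 / (m : ℝ)) * (c x : ℝ) - q x|) :
    ∃ B : Finset X, (m : ℝ) * (ε / 2) ≤ (∑ x ∈ B, (c x : ℝ)) - (m : ℝ) * ∑ x ∈ B, q x := by
  classical
  have hm' : (0:ℝ) < m := by exact_mod_cast hm
  set d : X → ℝ := fun x => (1 / (m : ℝ)) * (c x : ℝ) - q x with hd_def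
  have hd_sum : ∑ x : X, d x = 0 := by
    have : ∑ x : X, (c x : ℝ) = m := by exact_mod_cast hc
    simp only [hd_def, Finset.sum_sub_distrib, ← Finset.mul_sum, this, hq1]
    field_simp
    norm_num
  set B : Finset X := Finset.univ.filter (fun x => 0 ≤ d x) with hB_def
  have hsplit := Finset.sum_filter_add_sum_filter_not Finset.univ (fun x => 0 ≤ d x) d
  have habs : ∑ x : X, |d x| = 2 * ∑ x ∈ B, d x := by
    have h1 : ∑ x ∈ B, |d x| = ∑ x ∈ B, d x := by
      apply Finset.sum_congr rfl
      intro x hx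
      rw [hB_def, Finset.mem_filter] at hx
      exact abs_of_nonneg hx.2
    have h2 : ∑ x ∈ Finset.univ.filter (fun x => ¬ 0 ≤ d x), |d x|
        = -∑ x ∈ Finset.univ.filter (fun x => ¬ 0 ≤ d x), d x := by
      rw [← Finset.sum_neg_distrib]
      apply Finset.sum_congr rfl
      intro x hx
      rw [Finset.mem_filter] at hx
      exact abs_of_neg (lt_of_not_ge hx.2)
    have h3 := Finset.sum_filter_add_sum_filter_not Finset.univ (fun x => 0 ≤ d x) (fun x => |d x|)
    rw [h1, h2] at h3
    rw [← h3]
    have : ∑ x ∈ Finset.univ.filter (fun x => ¬ 0 ≤ d x), d x = - ∑ x ∈ B, d x := by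
      have hB' : ∑ x ∈ B, d x = ∑ x ∈ Finset.univ.filter (fun x => 0 ≤ d x), d x := rfl
      linarith [hd_sum, hsplit, hB']
    rw [this]
    ring
  refine ⟨B, ?_⟩
  have hBd : ε / 2 < ∑ x ∈ B, d x := by
    rw [habs] at hlt
    linarith
  have : ∑ x ∈ B, d x = (1 / (m:ℝ)) * (∑ x ∈ B, (c x : ℝ)) - ∑ x ∈ B, q x := by
    simp [hd_def, Finset.sum_sub_distrib, Finset.mul_sum]
  rw [this] at hBd
  have := mul_le_mul_of_nonneg_left hBd.le hm'.le
  calc (m:ℝ) * (ε / 2) ≤ (m:ℝ) * ((1 / (m:ℝ)) * (∑ x ∈ B, (c x : ℝ)) - ∑ x ∈ B, q x) := this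
    _ = (∑ x ∈ B, (c x : ℝ)) - (m : ℝ) * ∑ x ∈ B, q x := by field_simp

lemma pmf_sum_toReal_one {X : Type*} [Fintype X] (p : PMF X) :
    ∑ x : X, (p x).toReal = 1 := by
  have h1 : ∑ x : X, p x = 1 := by rw [← tsum_fintype (L := .unconditional _)]; exact p.tsum_coe
  have h2 : (∑ x : X, p x).toReal = ∑ x : X, (p x).toReal :=
    ENNReal.toReal_sum (fun a _ => p.apply_ne_top a)
  rw [h1] at h2; simpa using h2.symm

lemma ind_sum_eq {X : Type*} [Fintype X] [DecidableEq X] (m : ℕ)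
    (f : Fin m → X) (B : Finset X) :
    ∑ i : Fin m, (if f i ∈ B then (1:ℝ) else 0)
      = ∑ x' ∈ B, ((Finset.univ.filter fun i : Fin m => f i = x').card : ℝ) := by
  have h1 : ∀ i : Fin m, (if f i ∈ B then (1:ℝ) else 0)
      = ∑ x' ∈ B, (if f i = x' then (1:ℝ) else 0) := by
    intro i
    rw [Finset.sum_ite_eq B (f i) (fun _ => (1:ℝ))]
  rw [Finset.sum_congr rfl (fun i _ => h1 i), Finset.sum_comm]
  apply Finset.sum_congr rfl
  intro x' _
  rw [Finset.sum_boole]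

/-- Transition-model concentration bound: for every state-action pair `(x,a)` one observes
`n (x,a)` i.i.d. next-state samples from the true transition distribution `pstar x a` on the
finite state space `X`; with probability at least `1 - δ'`, simultaneously for all `(x,a)`,
the L1 distance between the empirical next-state distribution and `pstar x a` is at most
`√((2/n(x,a))·log(2|X||A|2^{|X|}/δ'))`. -/
theorem transition_model_concentration
    {Ω : Type*} [MeasureSpace Ω] [IsProbabilityMeasure (ℙ : Measure Ω)]
    {X A : Type*} [Fintype X] [Fintype A] [Nonempty X] [Nonempty A] [DecidableEq X]
    [MeasurableSpace X] [MeasurableSingletonClass X]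
    (δ' : ℝ) (hδ' : δ' ∈ Set.Ioo (0 : ℝ) 1)
    (n : X × A → ℕ) (hn : ∀ xa, 1 ≤ n xa)
    (pstar : X → A → PMF X)
    (Y : (x : X) → (a : A) → Fin (n (x, a)) → Ω → X)
    (hmeas : ∀ x a i, Measurable (Y x a i))
    (hindep : ∀ x a, iIndepFun (Y x a) ℙ)
    (hlaw : ∀ x a i, Measure.map (Y x a i) ℙ = (pstar x a).toMeasure) :
    1 - ENNReal.ofReal δ'
      ≤ ℙ {ω | ∀ (x : X) (a : A),
          ∑ x' : X,
            |(1 / (n (x, a) : ℝ)) *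
                ((Finset.univ.filter fun i : Fin (n (x, a)) => Y x a i ω = x').card : ℝ)
              - (pstar x a x').toReal|
          ≤ Real.sqrt ((2 / (n (x, a) : ℝ)) *
              Real.log (2 * (Fintype.card X) * (Fintype.card A) * 2 ^ (Fintype.card X) / δ'))} := by
  classical
  obtain ⟨hδ0, hδ1⟩ := hδ'
  set Mr : ℝ := 2 * (Fintype.card X) * (Fintype.card A) * 2 ^ (Fintype.card X) with hMr_def
  have hcX : (1:ℝ) ≤ (Fintype.card X : ℝ) := by exact_mod_cast Fintype.card_pos
  have hcA : (1:ℝ) ≤ (Fintype.card A : ℝ) := by exact_mod_cast Fintype.card_pos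
  have hpow : (1:ℝ) ≤ 2 ^ (Fintype.card X) := one_le_pow₀ (by norm_num)
  have hMr1 : (1:ℝ) ≤ Mr := by
    rw [hMr_def]
    have h1 : (1:ℝ) ≤ (Fintype.card X : ℝ) * (Fintype.card A : ℝ) := by nlinarith
    have h2 : (1:ℝ) ≤ (Fintype.card X : ℝ) * (Fintype.card A : ℝ) * 2 ^ (Fintype.card X) := by
      nlinarith
    nlinarith
  have hMrpos : (0:ℝ) < Mr := lt_of_lt_of_le one_pos hMr1
  have hlognn : 0 ≤ Real.log (Mr / δ') :=
    Real.log_nonneg ((one_le_div hδ0).mpr (le_trans hδ1.le hMr1))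
  set ε : X → A → ℝ := fun x a => Real.sqrt ((2 / (n (x, a) : ℝ)) * Real.log (Mr / δ'))
    with hε_def
  set bad : (x : X) → (a : A) → Finset X → Set Ω := fun x a B =>
    {ω | (n (x, a) : ℝ) * (ε x a / 2) ≤
        ∑ i : Fin (n (x, a)),
          ((if Y x a i ω ∈ B then (1:ℝ) else 0) - ∑ x' ∈ B, (pstar x a x').toReal)}
    with hbad_def
  have hεnn : ∀ x a, 0 ≤ ε x a := fun x a => Real.sqrt_nonneg _
  -- probability of each bad event
  have hbadP : ∀ x a B, ℙ (bad x a B) ≤ ENNReal.ofReal (δ' / Mr) := by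
    intro x a B
    have h := subset_dev_bound (n (x, a)) (pstar x a) (Y x a) (hmeas x a) (hindep x a)
      (hlaw x a) B (ε x a / 2) (div_nonneg (hεnn x a) (by norm_num))
    refine le_trans h (le_of_eq ?_)
    congr 1
    have hm1 : (1:ℝ) ≤ (n (x, a) : ℝ) := by exact_mod_cast hn (x, a)
    have hmne : (n (x, a) : ℝ) ≠ 0 := by linarith
    have hε2 : (ε x a) ^ 2 = (2 / (n (x, a) : ℝ)) * Real.log (Mr / δ') := by
      rw [hε_def]
      exact Real.sq_sqrt (by positivity)
    have hexp : -2 * (n (x, a) : ℝ) * (ε x a / 2) ^ 2 = - Real.log (Mr / δ') := by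
      have : (ε x a / 2) ^ 2 = (ε x a) ^ 2 / 4 := by ring
      rw [this, hε2]
      field_simp
      ring
    rw [hexp, Real.exp_neg, Real.exp_log (by positivity), inv_div]
  -- the union of bad events
  set U : Set Ω := ⋃ z : X × A × Finset X, bad z.1 z.2.1 z.2.2 with hU_def
  have hUP : ℙ U ≤ ENNReal.ofReal δ' := by
    have hcount : (Fintype.card (X × A × Finset X) : ℝ) * (δ' / Mr) = δ' / 2 := by
      have : (Fintype.card (X × A × Finset X) : ℝ)
          = (Fintype.card X : ℝ) * ((Fintype.card A : ℝ) * 2 ^ (Fintype.card X)) := by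
        rw [Fintype.card_prod, Fintype.card_prod, Fintype.card_finset]
        push_cast
        ring
      rw [this, hMr_def]
      field_simp
    refine le_trans (measure_iUnion_fintype_le _ _) ?_
    have h1 : ∑ z : X × A × Finset X, ℙ (bad z.1 z.2.1 z.2.2)
        ≤ ∑ z : X × A × Finset X, ENNReal.ofReal (δ' / Mr) :=
      Finset.sum_le_sum (fun z _ => hbadP z.1 z.2.1 z.2.2)
    refine h1.trans ?_
    rw [Finset.sum_const, Finset.card_univ, nsmul_eq_mul, ← ENNReal.ofReal_natCast,
      ← ENNReal.ofReal_mul (by positivity), hcount]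
    exact ENNReal.ofReal_le_ofReal (by linarith)
  -- complement of the good event is contained in U
  set T : Set Ω := {ω | ∀ (x : X) (a : A),
      ∑ x' : X,
        |(1 / (n (x, a) : ℝ)) *
            ((Finset.univ.filter fun i : Fin (n (x, a)) => Y x a i ω = x').card : ℝ)
          - (pstar x a x').toReal| ≤ ε x a} with hT_def
  have hsub : Tᶜ ⊆ U := by
    intro ω hω
    simp only [hT_def, Set.mem_compl_iff, Set.mem_setOf_eq, not_forall, not_le] at hω
    obtain ⟨x, a, hxa⟩ := hω
    have hm : 0 < n (x, a) := hn (x, a)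
    have hq1 : ∑ x' : X, (pstar x a x').toReal = 1 := pmf_sum_toReal_one _
    have hc : ∑ x' : X, (Finset.univ.filter fun i : Fin (n (x, a)) => Y x a i ω = x').card
        = n (x, a) := by
      have := Finset.card_eq_sum_card_fiberwise
        (f := fun i : Fin (n (x, a)) => Y x a i ω) (s := Finset.univ) (t := Finset.univ)
        (fun _ _ => Finset.mem_univ _)
      rw [Finset.card_univ, Fintype.card_fin] at this
      exact this.symm
    obtain ⟨B, hB⟩ := l1_pointwise (n (x, a)) hm _ hq1 _ hc (ε x a) hxa
    simp only [hU_def, Set.mem_iUnion]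
    refine ⟨⟨x, a, B⟩, ?_⟩
    simp only [hbad_def, Set.mem_setOf_eq]
    have heq : ∑ i : Fin (n (x, a)),
          ((if Y x a i ω ∈ B then (1:ℝ) else 0) - ∑ x' ∈ B, (pstar x a x').toReal)
        = (∑ x' ∈ B, ((Finset.univ.filter fun i : Fin (n (x, a)) => Y x a i ω = x').card : ℝ))
          - (n (x, a) : ℝ) * ∑ x' ∈ B, (pstar x a x').toReal := by
      rw [Finset.sum_sub_distrib, ind_sum_eq, Finset.sum_const, Finset.card_univ,
        Fintype.card_fin, nsmul_eq_mul]
    rw [heq]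
    exact hB
  -- conclude
  have h2 : ℙ Tᶜ ≤ ENNReal.ofReal δ' := le_trans (measure_mono hsub) hUP
  have hfin : 1 - ENNReal.ofReal δ' ≤ ℙ T := by
    rw [tsub_le_iff_right]
    calc (1 : ℝ≥0∞) = ℙ (T ∪ Tᶜ) := by rw [Set.union_compl_self, measure_univ]
      _ ≤ ℙ T + ℙ Tᶜ := measure_union_le _ _
      _ ≤ ℙ T + ENNReal.ofReal δ' := add_le_add_right h2 _
  exact hfin
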